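/- Let G = A_1 ⊎ ... ⊎ A_m be an abelian partition of a finite group G, and let s be the minimal size among the parts A_i. Then s ≤ c(G), the number of conjugacy classes of G. -/
import Mathlib

/-- An abelian partition of a group `G`: a family of `n` pairwise disjoint sets covering `G`,
each of size at least 2 and consisting of pairwise commuting elements. -/
def IsAbelianPartition {G : Type*} [Group G] {n : ℕ} (A : Fin n → Set G) : Prop :=
  (∀ i, 2 ≤ (A i).ncard) ∧ (⋃ i, A i) = Set.univ ∧
    Pairwise (Function.onFun Disjoint A) ∧
    ∀ i, ∀ x ∈ A i, ∀ y ∈ A i, x * y = y * x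

/-- The minimal number of parts in an abelian partition of `G` (0 if none exists). -/
noncomputable def apDegree (G : Type*) [Group G] : ℕ :=
  sInf {n | ∃ A : Fin n → Set G, IsAbelianPartition A}

/-- The maximal size of a noncommuting subset of `G`. -/
noncomputable def maxNoncommuting (G : Type*) [Group G] : ℕ :=
  sSup {k | ∃ S : Set G, S.ncard = k ∧ ∀ x ∈ S, ∀ y ∈ S, x ≠ y → x * y ≠ y * x}

theorem min_part_size_le_card_conjClasses
    {G : Type*} [Group G] [Finite G]
    {m : ℕ} (A : Fin m → Set G) (hA : IsAbelianPartition A)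
    (s : ℕ) (hs_mem : ∃ i, (A i).ncard = s) (hs_min : ∀ i, s ≤ (A i).ncard) :
    s ≤ Nat.card (ConjClasses G) := by
  classical
  have := Fintype.ofFinite G
  have hcomm := card_comm_eq_card_conjClasses_mul_card G
  -- count commuting pairs as a sum over x
  have hsum : Nat.card { p : G × G // Commute p.1 p.2 } =
      ∑ x : G, Nat.card {y : G // Commute x y} := by
    simp only [Nat.card_eq_fintype_card]
    rw [Fintype.card_congr (Equiv.subtypeProdEquivSigmaSubtype Commute), Fintype.card_sigma]
  have hlow : ∀ x : G, s ≤ Nat.card {y : G // Commute x y} := by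
    intro x
    obtain ⟨i, hi⟩ : ∃ i, x ∈ A i := by
      have : x ∈ ⋃ i, A i := hA.2.1 ▸ Set.mem_univ x
      simpa using this
    have hsub : A i ⊆ {y : G | Commute x y} := fun y hy => hA.2.2.2 i x hi y hy
    calc s ≤ (A i).ncard := hs_min i
      _ ≤ {y : G | Commute x y}.ncard := Set.ncard_le_ncard hsub (Set.toFinite _)
      _ = Nat.card {y : G // Commute x y} := rfl
  have h1 : s * Nat.card G ≤ Nat.card (ConjClasses G) * Nat.card G := by
    rw [← hcomm, hsum]
    calc s * Nat.card G = ∑ _x : G, s := by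
          simp [Nat.card_eq_fintype_card, mul_comm]
      _ ≤ ∑ x : G, Nat.card {y : G // Commute x y} := Finset.sum_le_sum fun x _ => hlow x
  exact Nat.le_of_mul_le_mul_right h1 Nat.card_pos
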